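/- Let φ₀ : (A, π₀) → (B, σ₀) be a Poisson morphism admitting a horizontal lift, and let π, σ be formal Poisson deformations of π₀ and σ₀. If H²_{CE,der}(A,B) = 0 (every closed 2-cochain in the multiderivation Chevalley–Eilenberg complex is exact), then there exists X ∈ λ·Der(B)[[λ]] such that Φ := exp(X)∘φ₀ : (A[[λ]], π) → (B[[λ]], σ) is a Poisson morphism. -/

import Mathlib

/-- A Poisson bracket on a commutative ring: an antisymmetric biderivation
satisfying the Jacobi identity. -/
structure IsPoissonBr {R : Type*} [CommRing R] (br : R → R → R) : Prop where
  add_left : ∀ x y z, br (x + y) z = br x z + br y z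
  add_right : ∀ x y z, br x (y + z) = br x y + br x z
  antisymm : ∀ x y, br x y = - br y x
  leibniz : ∀ x y z, br x (y * z) = br x y * z + y * br x z
  jacobi : ∀ x y z, br x (br y z) = br (br x y) z + br y (br x z)

/-- `D` represents an element `X ∈ λ·Der(B)[[λ]]`, i.e. a formal derivation of `B[[λ]]`
(additive, `K`-linear, Leibniz, `λ`-linear) whose zeroth order term vanishes. -/
def IsFormalDer (K : Type*) {B : Type*} [Field K] [CommRing B] [Algebra K B]
    (D : PowerSeries B → PowerSeries B) : Prop :=
  (∀ f g, D (f + g) = D f + D g) ∧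
  (∀ (c : K) (f : PowerSeries B), D (c • f) = c • D f) ∧
  (∀ f g, D (f * g) = D f * g + f * D g) ∧
  (∀ f, D (PowerSeries.X * f) = PowerSeries.X * D f) ∧
  (∀ f, PowerSeries.coeff (R := B) 0 (D f) = 0)

/-- The exponential `exp(D) = id + D + D²/2! + ⋯`, well defined in each `λ`-order. -/
noncomputable def expF (K : Type*) {B : Type*} [Field K] [CommRing B] [Algebra K B]
    (D : PowerSeries B → PowerSeries B) : PowerSeries B → PowerSeries B :=
  fun f => PowerSeries.mk fun n =>
    ∑ m ∈ Finset.range (n + 1), ((m.factorial : K)⁻¹) • PowerSeries.coeff (R := B) n (D^[m] f)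

/-!
Statement 9 (Existence): let `φ₀ : (A,π₀) → (B,σ₀)` be a Poisson morphism admitting a
horizontal lift, and `π`, `σ` formal Poisson deformations of `π₀`, `σ₀`.  If
`H²_{CE,der}(A,B) = 0` (every closed multiderivation 2-cochain is exact), then there is
`X ∈ λ·Der(B)[[λ]]` such that `Φ = exp(X) ∘ φ₀ : (A[[λ]],π) → (B[[λ]],σ)` is a Poisson
morphism.
-/

set_option linter.unusedSectionVars false

open PowerSeries Finset

section Reindex
variable {M : Type*} [AddCommMonoid M]

lemma sum_range_antidiag_left (n : ℕ) (F : ℕ → ℕ → ℕ → M) :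
    ∑ k ∈ range (n+1), ∑ p ∈ antidiagonal (n-k), F k p.1 p.2
      = ∑ p ∈ antidiagonal n, ∑ k ∈ range (p.1+1), F k (p.1 - k) p.2 := by
  rw [Finset.sum_sigma' (range (n+1)) (fun k => antidiagonal (n-k))
    (fun k p => F k p.1 p.2),
    Finset.sum_sigma' (antidiagonal n) (fun p => range (p.1+1))
    (fun p k => F k (p.1 - k) p.2)]
  refine Finset.sum_nbij' (fun x => ⟨(x.1 + x.2.1, x.2.2), x.1⟩)
    (fun y => ⟨y.2, (y.1.1 - y.2, y.1.2)⟩) ?_ ?_ ?_ ?_ ?_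
  · rintro ⟨k, p, q⟩ h
    simp only [Finset.mem_sigma, Finset.mem_range, Finset.HasAntidiagonal.mem_antidiagonal] at h ⊢
    omega
  · rintro ⟨⟨i, j⟩, k⟩ h
    simp only [Finset.mem_sigma, Finset.mem_range, Finset.HasAntidiagonal.mem_antidiagonal] at h ⊢
    omega
  · rintro ⟨k, p, q⟩ h
    have : k + p - k = p := by omega
    simp [this]
  · rintro ⟨⟨i, j⟩, k⟩ h
    simp only [Finset.mem_sigma, Finset.mem_range, Finset.HasAntidiagonal.mem_antidiagonal] at h
    have : k + (i - k) = i := by omega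
    simp [this]
  · rintro ⟨k, p, q⟩ h
    have : k + p - k = p := by omega
    simp [this]

lemma sum_range_antidiag_right (n : ℕ) (F : ℕ → ℕ → ℕ → M) :
    ∑ k ∈ range (n+1), ∑ p ∈ antidiagonal (n-k), F k p.1 p.2
      = ∑ p ∈ antidiagonal n, ∑ k ∈ range (p.2+1), F k p.1 (p.2 - k) := by
  rw [Finset.sum_sigma' (range (n+1)) (fun k => antidiagonal (n-k))
    (fun k p => F k p.1 p.2),
    Finset.sum_sigma' (antidiagonal n) (fun p => range (p.2+1))
    (fun p k => F k p.1 (p.2 - k))]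
  refine Finset.sum_nbij' (fun x => ⟨(x.2.1, x.1 + x.2.2), x.1⟩)
    (fun y => ⟨y.2, (y.1.1, y.1.2 - y.2)⟩) ?_ ?_ ?_ ?_ ?_
  · rintro ⟨k, p, q⟩ h
    simp only [Finset.mem_sigma, Finset.mem_range, Finset.HasAntidiagonal.mem_antidiagonal] at h ⊢
    omega
  · rintro ⟨⟨i, j⟩, k⟩ h
    simp only [Finset.mem_sigma, Finset.mem_range, Finset.HasAntidiagonal.mem_antidiagonal] at h ⊢
    omega
  · rintro ⟨k, p, q⟩ h
    have : k + q - k = q := by omega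
    simp [this]
  · rintro ⟨⟨i, j⟩, k⟩ h
    simp only [Finset.mem_sigma, Finset.mem_range, Finset.HasAntidiagonal.mem_antidiagonal] at h
    have : k + (j - k) = j := by omega
    simp [this]
  · rintro ⟨k, p, q⟩ h
    have : k + q - k = q := by omega
    simp [this]

end Reindex

section Dm
variable {K B : Type*} [Field K] [CharZero K] [CommRing B] [Algebra K B]

/-- The coefficientwise formal derivation attached to a sequence of derivations. -/
noncomputable def Dm (d : ℕ → Derivation K B B) : PowerSeries B → PowerSeries B :=
  fun f => PowerSeries.mk fun n =>
    ∑ k ∈ Finset.range (n + 1), d k (PowerSeries.coeff (R := B) (n - k) f)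

lemma coeff_Dm (d : ℕ → Derivation K B B) (n : ℕ) (f : PowerSeries B) :
    coeff (R := B) n (Dm d f) = ∑ k ∈ range (n + 1), d k (coeff (R := B) (n - k) f) :=
  coeff_mk _ _

lemma Dm_add (d : ℕ → Derivation K B B) (f g : PowerSeries B) :
    Dm d (f + g) = Dm d f + Dm d g := by
  ext n
  simp [coeff_Dm, Finset.sum_add_distrib]

lemma Dm_zero (d : ℕ → Derivation K B B) : Dm d 0 = 0 := by
  ext n; simp [coeff_Dm]

lemma Dm_smul (d : ℕ → Derivation K B B) (c : K) (f : PowerSeries B) :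
    Dm d (c • f) = c • Dm d f := by
  ext n
  simp [coeff_Dm, Derivation.map_smul, Finset.smul_sum]

lemma Dm_mul (d : ℕ → Derivation K B B) (f g : PowerSeries B) :
    Dm d (f * g) = Dm d f * g + f * Dm d g := by
  ext n
  rw [map_add, coeff_Dm, coeff_mul, coeff_mul]
  have hL : ∀ k ∈ range (n + 1), d k (coeff (R := B) (n - k) (f * g)) =
      (∑ p ∈ antidiagonal (n - k), d k (coeff (R := B) p.1 f) * coeff (R := B) p.2 g)
      + ∑ p ∈ antidiagonal (n - k), coeff (R := B) p.1 f * d k (coeff (R := B) p.2 g) := by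
    intro k _
    rw [coeff_mul, map_sum, ← Finset.sum_add_distrib]
    refine Finset.sum_congr rfl fun p _ => ?_
    rw [Derivation.leibniz, smul_eq_mul, smul_eq_mul]
    ring
  rw [Finset.sum_congr rfl hL, Finset.sum_add_distrib,
    sum_range_antidiag_left n (fun k p q => d k (coeff (R := B) p f) * coeff (R := B) q g),
    sum_range_antidiag_right n (fun k p q => coeff (R := B) p f * d k (coeff (R := B) q g))]
  congr 1
  · refine Finset.sum_congr rfl fun p _ => ?_
    rw [coeff_Dm, Finset.sum_mul]
  · refine Finset.sum_congr rfl fun p _ => ?_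
    rw [coeff_Dm, Finset.mul_sum]

lemma Dm_X (d : ℕ → Derivation K B B) (f : PowerSeries B) :
    Dm d (PowerSeries.X * f) = PowerSeries.X * Dm d f := by
  ext n
  cases n with
  | zero => simp [coeff_Dm, coeff_zero_X_mul]
  | succ n =>
    rw [coeff_Dm, coeff_succ_X_mul, coeff_Dm, Finset.sum_range_succ]
    have h1 : coeff (R := B) (n + 1 - (n+1)) (PowerSeries.X * f) = 0 := by
      simp [coeff_zero_X_mul]
    rw [h1, map_zero, add_zero]
    refine Finset.sum_congr rfl fun k hk => ?_
    rw [Finset.mem_range] at hk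
    congr 1
    have : n + 1 - k = (n - k) + 1 := by omega
    rw [this, coeff_succ_X_mul]

lemma coeff_zero_Dm (d : ℕ → Derivation K B B) (hd0 : d 0 = 0) (f : PowerSeries B) :
    coeff (R := B) 0 (Dm d f) = 0 := by
  simp [coeff_Dm, hd0]

/-- order raising for iterates -/
lemma coeff_Dm_iter_eq_zero (d : ℕ → Derivation K B B) (hd0 : d 0 = 0) :
    ∀ (m j : ℕ) (f : PowerSeries B), j < m → coeff (R := B) j ((Dm d)^[m] f) = 0 := by
  intro m
  induction m with
  | zero => intro j f h; omega
  | succ m ih =>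
    intro j f _
    rw [Function.iterate_succ_apply', coeff_Dm]
    refine Finset.sum_eq_zero fun k hk => ?_
    rcases Nat.eq_zero_or_pos k with h0 | hpos
    · subst h0; simp [hd0]
    · have : j - k < m := by
        rw [Finset.mem_range] at hk
        omega
      rw [ih _ _ this, map_zero]

end Dm


open PowerSeries Finset


section Triangle
variable {M : Type*} [AddCommMonoid M]

lemma sum_triangle_eq_sum_square (n : ℕ) (G : ℕ → ℕ → M)
    (hG : ∀ i j, n < i + j → G i j = 0) :
    ∑ m ∈ range (n+1), ∑ i ∈ range (m+1), G i (m - i)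
      = ∑ i ∈ range (n+1), ∑ j ∈ range (n+1), G i j := by
  rw [Finset.sum_sigma' (range (n+1)) (fun m => range (m+1)) (fun m i => G i (m - i)),
    ← Finset.sum_product' (range (n+1)) (range (n+1)) (fun i j => G i j)]
  rw [← Finset.sum_subset
    (Finset.filter_subset (fun p : ℕ × ℕ => p.1 + p.2 ≤ n) (range (n+1) ×ˢ range (n+1)))
    (fun x hx hnx => ?_)]
  · refine Finset.sum_nbij' (fun x => (x.2, x.1 - x.2)) (fun y => ⟨y.1 + y.2, y.1⟩)
      ?_ ?_ ?_ ?_ ?_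
    · rintro ⟨m, i⟩ h
      simp only [Finset.mem_sigma, Finset.mem_range, Finset.mem_filter,
        Finset.mem_product] at h ⊢
      omega
    · rintro ⟨i, j⟩ h
      simp only [Finset.mem_sigma, Finset.mem_range, Finset.mem_filter,
        Finset.mem_product] at h ⊢
      omega
    · rintro ⟨m, i⟩ h
      simp only [Finset.mem_sigma, Finset.mem_range] at h
      have : i + (m - i) = m := by omega
      simp [this]
    · rintro ⟨i, j⟩ h
      have : i + j - i = j := by omega
      simp [this]
    · rintro ⟨m, i⟩ h
      rfl
  · simp only [Finset.mem_filter, Finset.mem_product, Finset.mem_range] at hx hnx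
    exact hG x.1 x.2 (by omega)

end Triangle

section ExpF
variable {K B : Type*} [Field K] [CharZero K] [CommRing B] [Algebra K B]
variable (D : PowerSeries B → PowerSeries B)

lemma coeff_expF (n : ℕ) (f : PowerSeries B) :
    coeff (R := B) n (expF K D f) =
      ∑ m ∈ range (n + 1), ((m.factorial : K)⁻¹) • coeff (R := B) n (D^[m] f) :=
  coeff_mk _ _

variable {D}

lemma iter_add (hadd : ∀ f g, D (f + g) = D f + D g) (m : ℕ) (f g : PowerSeries B) :
    D^[m] (f + g) = D^[m] f + D^[m] g := by
  induction m generalizing f g with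
  | zero => rfl
  | succ m ih => rw [Function.iterate_succ_apply', Function.iterate_succ_apply',
      Function.iterate_succ_apply', ih, hadd]

lemma iter_zero (hz : D 0 = 0) (m : ℕ) : D^[m] (0 : PowerSeries B) = 0 := by
  induction m with
  | zero => rfl
  | succ m ih => rw [Function.iterate_succ_apply, hz, ih]

lemma iter_smul (hs : ∀ (c : K) f, D (c • f) = c • D f) (m : ℕ) (c : K)
    (f : PowerSeries B) : D^[m] (c • f) = c • D^[m] f := by
  induction m generalizing f with
  | zero => rfl
  | succ m ih => rw [Function.iterate_succ_apply, Function.iterate_succ_apply, hs, ih]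

lemma iter_X (hX : ∀ f, D (PowerSeries.X * f) = PowerSeries.X * D f) (m : ℕ)
    (f : PowerSeries B) : D^[m] (PowerSeries.X * f) = PowerSeries.X * D^[m] f := by
  induction m generalizing f with
  | zero => rfl
  | succ m ih => rw [Function.iterate_succ_apply, Function.iterate_succ_apply, hX, ih]

lemma expF_add (hadd : ∀ f g, D (f + g) = D f + D g) (f g : PowerSeries B) :
    expF K D (f + g) = expF K D f + expF K D g := by
  ext n
  simp only [map_add, coeff_expF, iter_add hadd, ← Finset.sum_add_distrib, smul_add]

lemma expF_zero (hz : D 0 = 0) : expF K D (0 : PowerSeries B) = 0 := by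
  ext n; simp [coeff_expF, iter_zero hz]

lemma D_neg (hadd : ∀ f g, D (f + g) = D f + D g) (hz : D 0 = 0)
    (f : PowerSeries B) : D (-f) = - D f := by
  have h : D f + D (-f) = 0 := by rw [← hadd, add_neg_cancel, hz]
  exact (neg_eq_of_add_eq_zero_right h).symm

lemma iter_neg (hadd : ∀ f g, D (f + g) = D f + D g) (hz : D 0 = 0) (m : ℕ)
    (f : PowerSeries B) : D^[m] (-f) = - D^[m] f := by
  induction m generalizing f with
  | zero => rfl
  | succ m ih => rw [Function.iterate_succ_apply, Function.iterate_succ_apply,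
      D_neg hadd hz, ih]

lemma expF_neg (hadd : ∀ f g, D (f + g) = D f + D g) (hz : D 0 = 0)
    (f : PowerSeries B) : expF K D (-f) = - expF K D f := by
  ext n
  simp only [coeff_expF, iter_neg hadd hz, map_neg, smul_neg, Finset.sum_neg_distrib]

end ExpF

section ExpF2
variable {K B : Type*} [Field K] [CharZero K] [CommRing B] [Algebra K B]
variable {D : PowerSeries B → PowerSeries B}

lemma coeff_zero_expF (f : PowerSeries B) :
    coeff (R := B) 0 (expF K D f) = coeff (R := B) 0 f := by
  rw [coeff_expF, Finset.sum_range_one]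
  simp

lemma expF_X (hX : ∀ f, D (PowerSeries.X * f) = PowerSeries.X * D f)
    (hord : ∀ m j f, j < m → coeff (R := B) j (D^[m] f) = 0) (f : PowerSeries B) :
    expF K D (PowerSeries.X * f) = PowerSeries.X * expF K D f := by
  ext n
  cases n with
  | zero =>
    rw [coeff_zero_expF]
    simp
  | succ n =>
    rw [coeff_expF, coeff_succ_X_mul, coeff_expF, Finset.sum_range_succ]
    have htop : ((n+1).factorial : K)⁻¹ • coeff (R := B) (n+1) (D^[n+1] (PowerSeries.X * f))
        = 0 := by
      rw [iter_X hX, coeff_succ_X_mul, hord (n+1) n f (by omega), smul_zero]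
    rw [htop, add_zero]
    refine Finset.sum_congr rfl fun m hm => ?_
    rw [iter_X hX, coeff_succ_X_mul]

lemma expF_smul (hs : ∀ (c : K) f, D (c • f) = c • D f) (c : K) (f : PowerSeries B) :
    expF K D (c • f) = c • expF K D f := by
  ext n
  simp only [coeff_expF, iter_smul hs, coeff_smul, Finset.smul_sum]
  exact Finset.sum_congr rfl fun m _ => smul_comm _ _ _

lemma D_nsmul (hadd : ∀ f g, D (f + g) = D f + D g) (hz : D 0 = 0) (c : ℕ)
    (f : PowerSeries B) : D (c • f) = c • D f := by
  induction c with
  | zero => simpa using hz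
  | succ c ih => rw [succ_nsmul, succ_nsmul, hadd, ih]

lemma D_sum (hadd : ∀ f g, D (f + g) = D f + D g) (hz : D 0 = 0)
    {ι : Type*} (s : Finset ι) (F : ι → PowerSeries B) :
    D (∑ i ∈ s, F i) = ∑ i ∈ s, D (F i) := by
  classical
  induction s using Finset.induction with
  | empty => simpa using hz
  | insert _ _ hni ih => rw [Finset.sum_insert hni, Finset.sum_insert hni, hadd, ih]

lemma iter_leibniz (hadd : ∀ f g, D (f + g) = D f + D g) (hz : D 0 = 0)
    (hmul : ∀ f g, D (f * g) = D f * g + f * D g) :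
    ∀ (m : ℕ) (f g : PowerSeries B),
      D^[m] (f * g) = ∑ i ∈ range (m+1), m.choose i • (D^[i] f * D^[m-i] g) := by
  intro m
  induction m with
  | zero => intro f g; simp
  | succ m ih =>
    intro f g
    rw [Function.iterate_succ_apply', ih, D_sum hadd hz]
    have hterm : ∀ i ∈ range (m+1),
        D (m.choose i • (D^[i] f * D^[m-i] g))
          = m.choose i • (D^[i+1] f * D^[m-i] g)
            + m.choose i • (D^[i] f * D^[m+1-i] g) := by
      intro i hi
      rw [Finset.mem_range] at hi
      have e1 : D (D^[i] f) = D^[i+1] f := (Function.iterate_succ_apply' D i f).symm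
      have e2 : D (D^[m-i] g) = D^[m-i+1] g := (Function.iterate_succ_apply' D (m-i) g).symm
      have e3 : m - i + 1 = m + 1 - i := by omega
      rw [D_nsmul hadd hz, hmul, smul_add, e1, e2, e3]
    rw [Finset.sum_congr rfl hterm, Finset.sum_add_distrib]
    -- RHS
    rw [Finset.sum_range_succ' (fun i => (m+1).choose i • (D^[i] f * D^[m+1-i] g)) (m+1)]
    have hrw : ∀ i ∈ range (m+1),
        (m+1).choose (i+1) • (D^[i+1] f * D^[m+1-(i+1)] g)
          = m.choose i • (D^[i+1] f * D^[m-i] g)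
            + m.choose (i+1) • (D^[i+1] f * D^[m-i] g) := by
      intro i hi
      have h1 : m + 1 - (i+1) = m - i := by omega
      rw [h1, Nat.choose_succ_succ, add_nsmul]
    rw [Finset.sum_congr rfl hrw, Finset.sum_add_distrib]
    have h2 : ∑ i ∈ range (m+1), m.choose (i+1) • (D^[i+1] f * D^[m-i] g)
        = ∑ i ∈ range m, m.choose (i+1) • (D^[i+1] f * D^[m-i] g) := by
      rw [Finset.sum_range_succ, Nat.choose_succ_self, zero_nsmul, add_zero]
    have h3 : ∑ i ∈ range (m+1), m.choose i • (D^[i] f * D^[m+1-i] g)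
        = ∑ i ∈ range m, m.choose (i+1) • (D^[i+1] f * D^[m-i] g)
          + m.choose 0 • (D^[0] f * D^[m+1] g) := by
      rw [Finset.sum_range_succ' (fun i => m.choose i • (D^[i] f * D^[m+1-i] g)) m]
      congr 1
      refine Finset.sum_congr rfl fun i hi => ?_
      have : m + 1 - (i+1) = m - i := by omega
      rw [this]
    rw [h2, h3]
    simp only [Nat.choose_zero_right, one_nsmul, Function.iterate_zero_apply]
    abel

lemma weightK (i m : ℕ) (h : i ≤ m) :
    ((m.factorial : K))⁻¹ * (m.choose i : K)
      = ((i.factorial : K))⁻¹ * (((m-i).factorial : K))⁻¹ := by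
  have key : (m.choose i : K) * (i.factorial : K) * ((m-i).factorial : K)
      = (m.factorial : K) := by
    exact_mod_cast congrArg (Nat.cast : ℕ → K) (Nat.choose_mul_factorial_mul_factorial h)
  have h1 : (i.factorial : K) ≠ 0 := Nat.cast_ne_zero.2 (Nat.factorial_ne_zero _)
  have h2 : ((m-i).factorial : K) ≠ 0 := Nat.cast_ne_zero.2 (Nat.factorial_ne_zero _)
  have h3 : (m.factorial : K) ≠ 0 := Nat.cast_ne_zero.2 (Nat.factorial_ne_zero _)
  field_simp
  linear_combination key

end ExpF2

section ExpF3
variable {K B : Type*} [Field K] [CharZero K] [CommRing B] [Algebra K B]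
variable {D : PowerSeries B → PowerSeries B}

lemma coeff_expF_ext (hord : ∀ m j f, j < m → coeff (R := B) j (D^[m] f) = 0)
    (h : PowerSeries B) {P n : ℕ} (hP : P ≤ n) :
    coeff (R := B) P (expF K D h)
      = ∑ i ∈ range (n+1), ((i.factorial : K))⁻¹ • coeff (R := B) P (D^[i] h) := by
  rw [coeff_expF]
  refine Finset.sum_subset (Finset.range_subset_range.2 (by omega)) fun i hi hni => ?_
  rw [Finset.mem_range] at hi hni
  rw [hord i P h (by omega), smul_zero]

lemma expF_mul (hadd : ∀ f g, D (f + g) = D f + D g) (hz : D 0 = 0)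
    (hmul : ∀ f g, D (f * g) = D f * g + f * D g)
    (hord : ∀ m j f, j < m → coeff (R := B) j (D^[m] f) = 0) (f g : PowerSeries B) :
    expF K D (f * g) = expF K D f * expF K D g := by
  ext n
  have hvan : ∀ i j, n < i + j → coeff (R := B) n (D^[i] f * D^[j] g) = 0 := by
    intro i j hij
    rw [coeff_mul]
    refine Finset.sum_eq_zero fun p hp => ?_
    rw [Finset.HasAntidiagonal.mem_antidiagonal] at hp
    have : p.1 < i ∨ p.2 < j := by omega
    rcases this with h | h
    · rw [hord i p.1 f h, zero_mul]
    · rw [hord j p.2 g h, mul_zero]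
  have hG : ∀ i j, n < i + j →
      (((i.factorial : K))⁻¹ * (((j.factorial : K)))⁻¹) • coeff (R := B) n (D^[i] f * D^[j] g)
        = 0 := fun i j hij => by rw [hvan i j hij, smul_zero]
  have hL : coeff (R := B) n (expF K D (f * g))
      = ∑ i ∈ range (n+1), ∑ j ∈ range (n+1),
          (((i.factorial : K))⁻¹ * (((j.factorial : K)))⁻¹)
            • coeff (R := B) n (D^[i] f * D^[j] g) := by
    rw [coeff_expF]
    have hmid : ∀ m ∈ range (n+1),
        ((m.factorial : K))⁻¹ • coeff (R := B) n (D^[m] (f * g))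
          = ∑ i ∈ range (m+1),
              (((i.factorial : K))⁻¹ * ((((m-i).factorial : K)))⁻¹)
                • coeff (R := B) n (D^[i] f * D^[m-i] g) := by
      intro m _
      rw [iter_leibniz hadd hz hmul m f g, map_sum, Finset.smul_sum]
      refine Finset.sum_congr rfl fun i hi => ?_
      rw [Finset.mem_range] at hi
      rw [map_nsmul, ← Nat.cast_smul_eq_nsmul K, smul_smul, weightK i m (by omega)]
    rw [Finset.sum_congr rfl hmid]
    exact sum_triangle_eq_sum_square n
      (fun i j => (((i.factorial : K))⁻¹ * (((j.factorial : K)))⁻¹)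
        • coeff (R := B) n (D^[i] f * D^[j] g)) hG
  have hR : coeff (R := B) n (expF K D f * expF K D g)
      = ∑ i ∈ range (n+1), ∑ j ∈ range (n+1),
          (((i.factorial : K))⁻¹ * (((j.factorial : K)))⁻¹)
            • coeff (R := B) n (D^[i] f * D^[j] g) := by
    rw [coeff_mul]
    have hstep : ∀ p ∈ antidiagonal n,
        coeff (R := B) p.1 (expF K D f) * coeff (R := B) p.2 (expF K D g)
          = ∑ i ∈ range (n+1), ∑ j ∈ range (n+1),
              (((i.factorial : K))⁻¹ * (((j.factorial : K)))⁻¹)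
                • (coeff (R := B) p.1 (D^[i] f) * coeff (R := B) p.2 (D^[j] g)) := by
      intro p hp
      rw [Finset.HasAntidiagonal.mem_antidiagonal] at hp
      rw [coeff_expF_ext hord f (show p.1 ≤ n by omega),
        coeff_expF_ext hord g (show p.2 ≤ n by omega), Finset.sum_mul_sum]
      exact Finset.sum_congr rfl fun i _ =>
        Finset.sum_congr rfl fun j _ => smul_mul_smul_comm _ _ _ _
    rw [Finset.sum_congr rfl hstep, Finset.sum_comm]
    refine Finset.sum_congr rfl fun i _ => ?_
    rw [Finset.sum_comm]
    refine Finset.sum_congr rfl fun j _ => ?_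
    rw [← Finset.smul_sum, ← coeff_mul]
  rw [hL, hR]

end ExpF3


open PowerSeries Finset

namespace IsPoissonBr
variable {R : Type*} [CommRing R] {br : R → R → R}
variable (h : IsPoissonBr br)
include h

lemma zero_right (x : R) : br x 0 = 0 := by
  have := h.add_right x 0 0
  simpa using this.symm

lemma zero_left (x : R) : br 0 x = 0 := by
  rw [h.antisymm, h.zero_right, neg_zero]

lemma neg_right (x y : R) : br x (-y) = - br x y := by
  have := h.add_right x y (-y)
  rw [add_neg_cancel, h.zero_right] at this
  linear_combination -this

lemma neg_left (x y : R) : br (-x) y = - br x y := by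
  rw [h.antisymm, h.neg_right, h.antisymm y x, neg_neg]

lemma sub_right (x y z : R) : br x (y - z) = br x y - br x z := by
  rw [sub_eq_add_neg, h.add_right, h.neg_right, sub_eq_add_neg]

lemma sub_left (x y z : R) : br (x - y) z = br x z - br y z := by
  rw [sub_eq_add_neg, h.add_left, h.neg_left, sub_eq_add_neg]

lemma leibniz_left (x y z : R) : br (x * y) z = x * br y z + br x z * y := by
  rw [h.antisymm, h.leibniz]
  linear_combination (-y) * h.antisymm z x + (-x) * h.antisymm z y

lemma cyclic (x y z : R) : br x (br y z) + br y (br z x) + br z (br x y) = 0 := by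
  have j := h.jacobi x y z
  have e1 : br y (br z x) = - br y (br x z) := by rw [h.antisymm z x, h.neg_right]
  have e2 : br z (br x y) = - br (br x y) z := by rw [h.antisymm]
  rw [e1, e2]
  linear_combination j

end IsPoissonBr

section PS
variable {R : Type*} [CommRing R]

/-- tail of a power series -/
noncomputable def psTail (f : PowerSeries R) : PowerSeries R :=
  PowerSeries.mk fun n => coeff (R := R) (n+1) f

lemma ps_decomp (f : PowerSeries R) :
    f = PowerSeries.C (R := R) (coeff (R := R) 0 f) + PowerSeries.X * psTail f := by
  ext n
  cases n with
  | zero => simp [psTail, coeff_zero_X_mul]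
  | succ n => simp [psTail, coeff_C, coeff_succ_X_mul]

lemma ps_orderFactor (N : ℕ) (v : PowerSeries R) (hv : ∀ j < N, coeff (R := R) j v = 0) :
    ∃ w, v = PowerSeries.X ^ N * w ∧ coeff (R := R) 0 w = coeff (R := R) N v := by
  obtain ⟨w, hw⟩ := (PowerSeries.X_pow_dvd_iff).2 hv
  refine ⟨w, hw, ?_⟩
  rw [hw]
  have := coeff_X_pow_mul w N 0
  rw [zero_add] at this
  rw [this]

lemma coeff_mul_ord_right (N : ℕ) (u v : PowerSeries R)
    (hv : ∀ j < N, coeff (R := R) j v = 0) :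
    coeff (R := R) N (u * v) = coeff (R := R) 0 u * coeff (R := R) N v := by
  rw [coeff_mul]
  rw [Finset.sum_eq_single (0, N)]
  · rintro ⟨p, q⟩ hb hne
    rw [Finset.HasAntidiagonal.mem_antidiagonal] at hb
    rcases Nat.lt_or_ge q N with hq | hq
    · rw [hv q hq, mul_zero]
    · exfalso; apply hne; simp at hb ⊢; omega
  · intro hn
    rw [Finset.HasAntidiagonal.mem_antidiagonal] at hn
    simp at hn

lemma coeff_mul_ord_left (N : ℕ) (u v : PowerSeries R)
    (hu : ∀ j < N, coeff (R := R) j u = 0) :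
    coeff (R := R) N (u * v) = coeff (R := R) N u * coeff (R := R) 0 v := by
  rw [mul_comm, coeff_mul_ord_right N v u hu, mul_comm]

end PS

section BrPS
variable {R S : Type*} [CommRing R] [CommRing S]
variable {br : PowerSeries R → PowerSeries R → PowerSeries R}
variable {br0 : R → R → R}

lemma br_X_right (h : IsPoissonBr br)
    (hX : ∀ f g, br (PowerSeries.X * f) g = PowerSeries.X * br f g)
    (f g : PowerSeries R) : br f (PowerSeries.X * g) = PowerSeries.X * br f g := by
  rw [h.antisymm, hX, h.antisymm g f, mul_neg, neg_neg]

lemma br_Xpow_left (h : IsPoissonBr br)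
    (hX : ∀ f g, br (PowerSeries.X * f) g = PowerSeries.X * br f g)
    (N : ℕ) (f g : PowerSeries R) :
    br (PowerSeries.X ^ N * f) g = PowerSeries.X ^ N * br f g := by
  induction N generalizing f with
  | zero => simp
  | succ N ih =>
    rw [pow_succ, mul_comm (PowerSeries.X ^ N) PowerSeries.X, mul_assoc, hX, ih,
      ← mul_assoc, mul_comm PowerSeries.X (PowerSeries.X ^ N), mul_assoc]

lemma br_Xpow_right (h : IsPoissonBr br)
    (hX : ∀ f g, br (PowerSeries.X * f) g = PowerSeries.X * br f g)
    (N : ℕ) (f g : PowerSeries R) :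
    br f (PowerSeries.X ^ N * g) = PowerSeries.X ^ N * br f g := by
  rw [h.antisymm, br_Xpow_left h hX, h.antisymm g f, mul_neg, neg_neg]

lemma coeff_zero_br (h : IsPoissonBr br)
    (hX : ∀ f g, br (PowerSeries.X * f) g = PowerSeries.X * br f g)
    (h0 : ∀ a b : R, coeff (R := R) 0 (br (PowerSeries.C (R := R) a) (PowerSeries.C (R := R) b)) = br0 a b)
    (u v : PowerSeries R) :
    coeff (R := R) 0 (br u v) = br0 (coeff (R := R) 0 u) (coeff (R := R) 0 v) := by
  conv_lhs => rw [ps_decomp u, ps_decomp v]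
  rw [h.add_left, h.add_right, h.add_right, map_add, map_add, map_add]
  rw [hX, br_X_right h hX, br_X_right h hX, coeff_zero_X_mul, coeff_zero_X_mul,
    coeff_zero_X_mul, h0]
  simp

/-- coefficient N of a bracket whose second argument has order ≥ N -/
lemma coeff_br_ord_right (h : IsPoissonBr br)
    (hX : ∀ f g, br (PowerSeries.X * f) g = PowerSeries.X * br f g)
    (h0 : ∀ a b : R, coeff (R := R) 0 (br (PowerSeries.C (R := R) a) (PowerSeries.C (R := R) b)) = br0 a b)
    (N : ℕ) (u v : PowerSeries R) (hv : ∀ j < N, coeff (R := R) j v = 0) :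
    coeff (R := R) N (br u v) = br0 (coeff (R := R) 0 u) (coeff (R := R) N v) := by
  obtain ⟨w, hw, hw0⟩ := ps_orderFactor N v hv
  rw [hw, br_Xpow_right h hX]
  have := coeff_X_pow_mul (br u w) N 0
  rw [zero_add] at this
  rw [this, coeff_zero_br h hX h0, hw0, ← hw]

lemma coeff_br_ord_left (h : IsPoissonBr br)
    (hX : ∀ f g, br (PowerSeries.X * f) g = PowerSeries.X * br f g)
    (h0 : ∀ a b : R, coeff (R := R) 0 (br (PowerSeries.C (R := R) a) (PowerSeries.C (R := R) b)) = br0 a b)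
    (N : ℕ) (u v : PowerSeries R) (hu : ∀ j < N, coeff (R := R) j u = 0) :
    coeff (R := R) N (br u v) = br0 (coeff (R := R) N u) (coeff (R := R) 0 v) := by
  obtain ⟨w, hw, hw0⟩ := ps_orderFactor N u hu
  rw [hw, br_Xpow_left h hX]
  have := coeff_X_pow_mul (br w v) N 0
  rw [zero_add] at this
  rw [this, coeff_zero_br h hX h0, hw0, ← hw]

/-- coefficient j of a bracket where one argument is replaced by something agreeing
up to order j. -/
lemma coeff_br_congr (h : IsPoissonBr br)
    (hX : ∀ f g, br (PowerSeries.X * f) g = PowerSeries.X * br f g)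
    (j : ℕ) (u u' v v' : PowerSeries R)
    (hu : ∀ i ≤ j, coeff (R := R) i u = coeff (R := R) i u')
    (hv : ∀ i ≤ j, coeff (R := R) i v = coeff (R := R) i v') :
    coeff (R := R) j (br u v) = coeff (R := R) j (br u' v') := by
  have e1 : br u v = br u' v' + (br (u - u') v + br u' (v - v')) := by
    rw [h.sub_left, h.sub_right]
    ring
  rw [e1, map_add, map_add]
  obtain ⟨w1, hw1, -⟩ := ps_orderFactor (j+1) (u - u')
    (fun i hi => by rw [map_sub, hu i (by omega), sub_self])
  obtain ⟨w2, hw2, -⟩ := ps_orderFactor (j+1) (v - v')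
    (fun i hi => by rw [map_sub, hv i (by omega), sub_self])
  rw [hw1, hw2, br_Xpow_left h hX, br_Xpow_right h hX,
    PowerSeries.coeff_X_pow_mul' _ _ _, PowerSeries.coeff_X_pow_mul' _ _ _]
  simp

end BrPS

section Compare
variable {K B : Type*} [Field K] [CharZero K] [CommRing B] [Algebra K B]

lemma coeff_Dm_iter_congr (d d' : ℕ → Derivation K B B) (N : ℕ)
    (hdd : ∀ k ≤ N, d k = d' k) :
    ∀ (m j : ℕ) (f : PowerSeries B), j ≤ N →
      coeff (R := B) j ((Dm d)^[m] f) = coeff (R := B) j ((Dm d')^[m] f) := by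
  intro m
  induction m with
  | zero => intro j f _; rfl
  | succ m ih =>
    intro j f hj
    rw [Function.iterate_succ_apply', Function.iterate_succ_apply', coeff_Dm, coeff_Dm]
    refine Finset.sum_congr rfl fun k hk => ?_
    rw [Finset.mem_range] at hk
    rw [hdd k (by omega), ih (j - k) f (by omega)]

lemma coeff_expF_congr (d d' : ℕ → Derivation K B B) (N : ℕ)
    (hdd : ∀ k ≤ N, d k = d' k) (j : ℕ) (hj : j ≤ N) (f : PowerSeries B) :
    coeff (R := B) j (expF K (Dm d) f) = coeff (R := B) j (expF K (Dm d') f) := by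
  rw [coeff_expF, coeff_expF]
  exact Finset.sum_congr rfl fun m _ => by
    rw [coeff_Dm_iter_congr d d' N hdd m j f hj]

lemma coeff_expF_top (d d' : ℕ → Derivation K B B) (N : ℕ) (hNpos : 0 < N)
    (hd0 : d 0 = 0) (hdd : ∀ k < N, d k = d' k) (hN' : d' N = 0) (f : PowerSeries B) :
    coeff (R := B) N (expF K (Dm d) f)
      = coeff (R := B) N (expF K (Dm d') f) + d N (coeff (R := B) 0 f) := by
  rw [coeff_expF, coeff_expF]
  have hterm : ∀ m ∈ Finset.range (N+1),
      ((m.factorial : K))⁻¹ • coeff (R := B) N ((Dm d)^[m] f)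
        = ((m.factorial : K))⁻¹ • coeff (R := B) N ((Dm d')^[m] f)
          + (if m = 1 then d N (coeff (R := B) 0 f) else 0) := by
    intro m _
    match m with
    | 0 => simp
    | 1 =>
      simp only [Function.iterate_one, Nat.factorial_one, Nat.cast_one, inv_one,
        one_smul, if_pos rfl]
      rw [coeff_Dm, coeff_Dm, Finset.sum_range_succ, Finset.sum_range_succ,
        Nat.sub_self, hN']
      have : ∑ k ∈ Finset.range N, (d k) (coeff (R := B) (N - k) f)
          = ∑ k ∈ Finset.range N, (d' k) (coeff (R := B) (N - k) f) := by
        refine Finset.sum_congr rfl fun k hk => ?_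
        rw [Finset.mem_range] at hk
        rw [hdd k hk]
      rw [this]
      simp
    | (m+2) =>
      have heq : coeff (R := B) N ((Dm d)^[m+2] f) = coeff (R := B) N ((Dm d')^[m+2] f) := by
        rw [show ((Dm d)^[m+2] f) = Dm d ((Dm d)^[m+1] f) from
            Function.iterate_succ_apply' _ _ _,
          show ((Dm d')^[m+2] f) = Dm d' ((Dm d')^[m+1] f) from
            Function.iterate_succ_apply' _ _ _, coeff_Dm, coeff_Dm]
        refine Finset.sum_congr rfl fun k hk => ?_
        rw [Finset.mem_range] at hk
        rcases Nat.eq_zero_or_pos k with rfl | hkpos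
        · have hd'0 : d' 0 = 0 := by rw [← hdd 0 hNpos, hd0]
          rw [hd0, hd'0]; simp
        · rcases Nat.lt_or_ge k N with hkN | hkN
          · rw [hdd k hkN,
              coeff_Dm_iter_congr d d' (N-1) (fun i hi => hdd i (by omega))
                (m+1) (N-k) f (by omega)]
          · have hkN' : k = N := by omega
            subst hkN'
            rw [Nat.sub_self, coeff_Dm_iter_eq_zero d hd0 (m+1) 0 f (by omega),
              hN']
            have hd'0 : d' 0 = 0 := by rw [← hdd 0 hNpos, hd0]
            have : coeff (R := B) 0 ((Dm d')^[m+1] f) = 0 :=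
              coeff_Dm_iter_eq_zero d' hd'0 (m+1) 0 f (by omega)
            rw [this]
            simp
      rw [heq]
      simp
  rw [Finset.sum_congr rfl hterm, Finset.sum_add_distrib,
    Finset.sum_ite_eq' (Finset.range (N+1)) 1 (fun _ => d N (coeff (R := B) 0 f))]
  rw [if_pos (Finset.mem_range.2 (by omega))]

end Compare

section TLayer
variable {K A B : Type*} [Field K] [CharZero K] [CommRing A] [CommRing B] [Algebra K B]

/-- the deformed morphism attempt -/
noncomputable def PhiF (φ₀ : A →+* B) (dd : ℕ → Derivation K B B)
    (f : PowerSeries A) : PowerSeries B :=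
  expF K (Dm dd) (PowerSeries.map φ₀ f)

/-- the defect 2-cochain -/
noncomputable def TFm (σ : PowerSeries B → PowerSeries B → PowerSeries B)
    (π : PowerSeries A → PowerSeries A → PowerSeries A)
    (φ₀ : A →+* B) (dd : ℕ → Derivation K B B)
    (f g : PowerSeries A) : PowerSeries B :=
  σ (PhiF φ₀ dd f) (PhiF φ₀ dd g) - PhiF φ₀ dd (π f g)

variable (φ₀ : A →+* B) (dd : ℕ → Derivation K B B)
variable (σ : PowerSeries B → PowerSeries B → PowerSeries B)
variable (π : PowerSeries A → PowerSeries A → PowerSeries A)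

lemma Phi_add (f g : PowerSeries A) :
    PhiF φ₀ dd (f + g) = PhiF φ₀ dd f + PhiF φ₀ dd g := by
  unfold PhiF
  rw [map_add, expF_add (Dm_add dd)]

lemma Phi_zero : PhiF φ₀ dd (0 : PowerSeries A) = 0 := by
  unfold PhiF
  rw [map_zero, expF_zero (Dm_zero dd)]

lemma Phi_neg (f : PowerSeries A) : PhiF φ₀ dd (-f) = - PhiF φ₀ dd f := by
  unfold PhiF
  rw [map_neg, expF_neg (Dm_add dd) (Dm_zero dd)]

lemma Phi_mul (hd0 : dd 0 = 0) (f g : PowerSeries A) :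
    PhiF φ₀ dd (f * g) = PhiF φ₀ dd f * PhiF φ₀ dd g := by
  unfold PhiF
  rw [map_mul, expF_mul (Dm_add dd) (Dm_zero dd) (Dm_mul dd)
    (coeff_Dm_iter_eq_zero dd hd0)]

lemma Phi_X (hd0 : dd 0 = 0) (f : PowerSeries A) :
    PhiF φ₀ dd (PowerSeries.X * f) = PowerSeries.X * PhiF φ₀ dd f := by
  unfold PhiF
  rw [map_mul, PowerSeries.map_X, expF_X (Dm_X dd) (coeff_Dm_iter_eq_zero dd hd0)]

lemma Phi_coeff0 (f : PowerSeries A) :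
    coeff (R := B) 0 (PhiF φ₀ dd f) = φ₀ (coeff (R := A) 0 f) := by
  unfold PhiF
  rw [coeff_zero_expF, PowerSeries.coeff_map]

end TLayer

section TLemmas
variable {K A B : Type*} [Field K] [CharZero K] [CommRing A] [CommRing B] [Algebra K B]
variable (φ₀ : A →+* B) (dd : ℕ → Derivation K B B)
variable {σ : PowerSeries B → PowerSeries B → PowerSeries B}
variable {π : PowerSeries A → PowerSeries A → PowerSeries A}
variable (hσp : IsPoissonBr σ) (hπp : IsPoissonBr π)
include hσp hπp

lemma T_add_right (f g h : PowerSeries A) :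
    TFm σ π φ₀ dd f (g + h) = TFm σ π φ₀ dd f g + TFm σ π φ₀ dd f h := by
  unfold TFm
  rw [Phi_add, hσp.add_right, hπp.add_right, Phi_add]
  ring

lemma T_add_left (f g h : PowerSeries A) :
    TFm σ π φ₀ dd (f + g) h = TFm σ π φ₀ dd f h + TFm σ π φ₀ dd g h := by
  unfold TFm
  rw [Phi_add, hσp.add_left, hπp.add_left, Phi_add]
  ring

lemma T_anti (f g : PowerSeries A) :
    TFm σ π φ₀ dd f g = - TFm σ π φ₀ dd g f := by
  unfold TFm
  rw [hσp.antisymm, hπp.antisymm f g, Phi_neg]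
  ring

lemma T_X_left (hd0 : dd 0 = 0) (hσX : ∀ f g, σ (PowerSeries.X * f) g = PowerSeries.X * σ f g)
    (hπX : ∀ f g, π (PowerSeries.X * f) g = PowerSeries.X * π f g)
    (f g : PowerSeries A) :
    TFm σ π φ₀ dd (PowerSeries.X * f) g = PowerSeries.X * TFm σ π φ₀ dd f g := by
  unfold TFm
  rw [Phi_X φ₀ dd hd0, hσX, hπX, Phi_X φ₀ dd hd0]
  ring

lemma T_X_right (hd0 : dd 0 = 0) (hσX : ∀ f g, σ (PowerSeries.X * f) g = PowerSeries.X * σ f g)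
    (hπX : ∀ f g, π (PowerSeries.X * f) g = PowerSeries.X * π f g)
    (f g : PowerSeries A) :
    TFm σ π φ₀ dd f (PowerSeries.X * g) = PowerSeries.X * TFm σ π φ₀ dd f g := by
  rw [T_anti φ₀ dd hσp hπp, T_X_left φ₀ dd hσp hπp hd0 hσX hπX,
    T_anti φ₀ dd hσp hπp f g]
  ring

lemma T_leibniz_left (hd0 : dd 0 = 0) (f g h : PowerSeries A) :
    TFm σ π φ₀ dd (f * g) h
      = PhiF φ₀ dd f * TFm σ π φ₀ dd g h + TFm σ π φ₀ dd f h * PhiF φ₀ dd g := by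
  unfold TFm
  rw [Phi_mul φ₀ dd hd0, hσp.leibniz_left, hπp.leibniz_left, Phi_add,
    Phi_mul φ₀ dd hd0, Phi_mul φ₀ dd hd0]
  ring

lemma T_jacobi (f g h : PowerSeries A) :
    σ (PhiF φ₀ dd f) (TFm σ π φ₀ dd g h) + σ (PhiF φ₀ dd g) (TFm σ π φ₀ dd h f)
      + σ (PhiF φ₀ dd h) (TFm σ π φ₀ dd f g)
      + TFm σ π φ₀ dd f (π g h) + TFm σ π φ₀ dd g (π h f)
      + TFm σ π φ₀ dd h (π f g) = 0 := by
  unfold TFm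
  rw [hσp.sub_right, hσp.sub_right, hσp.sub_right]
  have c1 := hσp.cyclic (PhiF φ₀ dd f) (PhiF φ₀ dd g) (PhiF φ₀ dd h)
  have c2 : PhiF φ₀ dd (π f (π g h)) + PhiF φ₀ dd (π g (π h f))
      + PhiF φ₀ dd (π h (π f g)) = 0 := by
    rw [← Phi_add, ← Phi_add, hπp.cyclic f g h, Phi_zero]
  linear_combination c1 - c2

lemma T_coeff_congr (dd' : ℕ → Derivation K B B) (N : ℕ)
    (hag : ∀ k ≤ N, dd k = dd' k)
    (hσX : ∀ f g, σ (PowerSeries.X * f) g = PowerSeries.X * σ f g)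
    (j : ℕ) (hj : j ≤ N) (f g : PowerSeries A) :
    coeff (R := B) j (TFm σ π φ₀ dd f g) = coeff (R := B) j (TFm σ π φ₀ dd' f g) := by
  unfold TFm
  rw [map_sub, map_sub]
  have hu : ∀ i ≤ j, coeff (R := B) i (PhiF φ₀ dd f) = coeff (R := B) i (PhiF φ₀ dd' f) :=
    fun i hi => coeff_expF_congr dd dd' N hag i (by omega) _
  have hv : ∀ i ≤ j, coeff (R := B) i (PhiF φ₀ dd g) = coeff (R := B) i (PhiF φ₀ dd' g) :=
    fun i hi => coeff_expF_congr dd dd' N hag i (by omega) _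
  have hπeq : coeff (R := B) j (PhiF φ₀ dd (π f g)) = coeff (R := B) j (PhiF φ₀ dd' (π f g)) :=
    coeff_expF_congr dd dd' N hag j hj _
  rw [coeff_br_congr hσp hσX j _ _ _ _ hu hv, hπeq]

end TLemmas


theorem stmt_9 {K A B : Type*} [Field K] [CharZero K] [CommRing A] [CommRing B]
    [Algebra K B]
    (π₀ : A → A → A) (σ₀ : B → B → B)
    (hπ₀ : IsPoissonBr π₀) (hσ₀ : IsPoissonBr σ₀)
    (φ₀ : A →+* B) (hφ₀ : ∀ x y, φ₀ (π₀ x y) = σ₀ (φ₀ x) (φ₀ y))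
    -- a horizontal lift along φ₀ : an A-linear right inverse of φ₀* on 1-cochains
    (hl : (A → B) → Derivation K B B)
    (hlsec : ∀ ξ : A → B,
      (∀ x y, ξ (x + y) = ξ x + ξ y) →
      (∀ x y, ξ (x * y) = φ₀ x * ξ y + ξ x * φ₀ y) →
      ∀ a, hl ξ (φ₀ a) = ξ a)
    (hlA : ∀ (ξ : A → B) (a : A) (b : B), hl (fun x => φ₀ a * ξ x) b = φ₀ a * hl ξ b)
    -- H²_{CE,der}(A,B) = 0 : closed multiderivation 2-cochains are exact
    (hH2 : ∀ R : A → A → B,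
      (∀ x y, R x y = - R y x) →
      (∀ x y z, R (x + y) z = R x z + R y z) →
      (∀ x y z, R (x * y) z = φ₀ x * R y z + R x z * φ₀ y) →
      (∀ a₁ a₂ a₃,
        σ₀ (φ₀ a₁) (R a₂ a₃) + σ₀ (φ₀ a₂) (R a₃ a₁) + σ₀ (φ₀ a₃) (R a₁ a₂)
        + R a₁ (π₀ a₂ a₃) + R a₂ (π₀ a₃ a₁) + R a₃ (π₀ a₁ a₂) = 0) →
      ∃ ξ : A → B,
        (∀ x y, ξ (x + y) = ξ x + ξ y) ∧
        (∀ x y, ξ (x * y) = φ₀ x * ξ y + ξ x * φ₀ y) ∧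
        ∀ a₁ a₂, R a₁ a₂ =
          σ₀ (φ₀ a₁) (ξ a₂) - σ₀ (φ₀ a₂) (ξ a₁) - ξ (π₀ a₁ a₂))
    -- formal Poisson deformations of π₀ and σ₀
    (π : PowerSeries A → PowerSeries A → PowerSeries A)
    (σ : PowerSeries B → PowerSeries B → PowerSeries B)
    (hπ : IsPoissonBr π) (hσ : IsPoissonBr σ)
    (hπX : ∀ f g, π (PowerSeries.X * f) g = PowerSeries.X * π f g)
    (hσX : ∀ f g, σ (PowerSeries.X * f) g = PowerSeries.X * σ f g)
    (hπ0 : ∀ a b : A, PowerSeries.coeff (R := A) 0 (π (PowerSeries.C (R := A) a) (PowerSeries.C (R := A) b))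
       = π₀ a b)
    (hσ0 : ∀ a b : B, PowerSeries.coeff (R := B) 0 (σ (PowerSeries.C (R := B) a) (PowerSeries.C (R := B) b))
       = σ₀ a b) :
    ∃ D : PowerSeries B → PowerSeries B, IsFormalDer K D ∧
      ∀ f g : PowerSeries A,
        expF K D (PowerSeries.map (φ₀ : A →+* B) (π f g)) =
          σ (expF K D (PowerSeries.map (φ₀ : A →+* B) f))
            (expF K D (PowerSeries.map (φ₀ : A →+* B) g)) := by
  classical
  -- the one-step correction
  obtain ⟨step, hstep⟩ : ∃ st : ℕ → (ℕ → Derivation K B B) → Derivation K B B,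
      ∀ (N : ℕ) (dd' : ℕ → Derivation K B B),
        (∃ ξ : A → B, (∀ x y, ξ (x + y) = ξ x + ξ y) ∧
          (∀ x y, ξ (x * y) = φ₀ x * ξ y + ξ x * φ₀ y) ∧
          ∀ a₁ a₂, - coeff (R := B) N (TFm σ π φ₀ dd' (C (R := A) a₁) (C (R := A) a₂))
            = σ₀ (φ₀ a₁) (ξ a₂) - σ₀ (φ₀ a₂) (ξ a₁) - ξ (π₀ a₁ a₂)) →
        ∃ ξ : A → B, (∀ x y, ξ (x + y) = ξ x + ξ y) ∧
          (∀ x y, ξ (x * y) = φ₀ x * ξ y + ξ x * φ₀ y) ∧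
          (∀ a₁ a₂, - coeff (R := B) N (TFm σ π φ₀ dd' (C (R := A) a₁) (C (R := A) a₂))
            = σ₀ (φ₀ a₁) (ξ a₂) - σ₀ (φ₀ a₂) (ξ a₁) - ξ (π₀ a₁ a₂)) ∧
          st N dd' = hl ξ := by
    refine ⟨fun N dd' =>
      if h : (∃ ξ : A → B, (∀ x y, ξ (x + y) = ξ x + ξ y) ∧
          (∀ x y, ξ (x * y) = φ₀ x * ξ y + ξ x * φ₀ y) ∧
          ∀ a₁ a₂, - coeff (R := B) N (TFm σ π φ₀ dd' (C (R := A) a₁) (C (R := A) a₂))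
            = σ₀ (φ₀ a₁) (ξ a₂) - σ₀ (φ₀ a₂) (ξ a₁) - ξ (π₀ a₁ a₂))
      then hl h.choose else 0, fun N dd' h => ?_⟩
    exact ⟨h.choose, h.choose_spec.1, h.choose_spec.2.1, h.choose_spec.2.2,
      by beta_reduce; rw [dif_pos h]⟩
  -- the recursive sequence of partial corrections
  obtain ⟨seq, hseq0, hseqS⟩ : ∃ s : ℕ → ℕ → Derivation K B B,
      s 0 = (fun _ => 0) ∧
      ∀ N, s (N+1) = Function.update (s N) (N+1) (step (N+1) (s N)) :=
    ⟨fun n => Nat.rec (fun _ => 0)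
      (fun N ih => Function.update ih (N+1) (step (N+1) ih)) n, rfl, fun _ => rfl⟩
  obtain ⟨dfin, hdfin_eq⟩ : ∃ dfn : ℕ → Derivation K B B, ∀ k, dfn k = seq k k :=
    ⟨fun k => seq k k, fun _ => rfl⟩
  have hdfin0 : dfin 0 = 0 := by rw [hdfin_eq 0, hseq0]
  have hdfin_succ : ∀ N, dfin (N+1) = step (N+1) (seq N) := by
    intro N
    rw [hdfin_eq, hseqS N, Function.update_self]
  have hseq_lo : ∀ N k, k ≤ N → seq N k = dfin k := by
    intro N
    induction N with
    | zero =>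
      intro k hk
      have : k = 0 := by omega
      subst this
      rw [hdfin_eq 0]
    | succ N ihN =>
      intro k hk
      rcases Nat.lt_or_ge k (N+1) with h | h
      · rw [hseqS N, Function.update_of_ne (show k ≠ N+1 by omega)]
        exact ihN k (by omega)
      · have : k = N + 1 := by omega
        subst this
        rw [hdfin_eq]
  have hseq_hi : ∀ N k, N < k → seq N k = 0 := by
    intro N
    induction N with
    | zero => intro k hk; rw [hseq0]
    | succ N ihN =>
      intro k hk
      rw [hseqS N, Function.update_of_ne (show k ≠ N+1 by omega)]
      exact ihN k (by omega)
  -- continuity facts for the deformed brackets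
  have hσ0' : ∀ u v, coeff (R := B) 0 (σ u v) = σ₀ (coeff (R := B) 0 u) (coeff (R := B) 0 v) :=
    coeff_zero_br hσ hσX hσ0
  have hπ0' : ∀ u v, coeff (R := A) 0 (π u v) = π₀ (coeff (R := A) 0 u) (coeff (R := A) 0 v) :=
    coeff_zero_br hπ hπX hπ0
  -- MAIN INDUCTION
  have main : ∀ N, ∀ f g : PowerSeries A, coeff (R := B) N (TFm σ π φ₀ dfin f g) = 0 := by
    intro N
    induction N using Nat.strong_induction_on with
    | _ N ih =>
      cases N with
      | zero =>
        intro f g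
        simp only [TFm]
        rw [map_sub, hσ0', Phi_coeff0, Phi_coeff0, Phi_coeff0, hπ0', hφ₀]
        exact sub_self _
      | succ M =>
        -- agreement of dfin with seq M below M+1
        have hag : ∀ k ≤ M, dfin k = seq M k := fun k hk => (hseq_lo M k hk).symm
        have hd0' : seq M 0 = 0 := by rw [← hag 0 (Nat.zero_le _), hdfin0]
        -- vanishing of the partial defect below order M+1
        have hvan' : ∀ j ≤ M, ∀ u v : PowerSeries A,
            coeff (R := B) j (TFm σ π φ₀ (seq M) u v) = 0 := by
          intro j hj u v
          rw [← T_coeff_congr φ₀ dfin hσ hπ (seq M) M hag hσX j hj u v]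
          exact ih j (by omega) u v
        have hvanlt : ∀ (u v : PowerSeries A), ∀ j < M + 1,
            coeff (R := B) j (TFm σ π φ₀ (seq M) u v) = 0 :=
          fun u v j hj => hvan' j (by omega) u v
        -- properties of the obstruction cochain S a b := coeff (M+1) (T' (C a) (C b))
        have hSanti : ∀ a b : A,
            coeff (R := B) (M+1) (TFm σ π φ₀ (seq M) (C (R := A) a) (C (R := A) b))
              = - coeff (R := B) (M+1) (TFm σ π φ₀ (seq M) (C (R := A) b) (C (R := A) a)) := by
          intro a b
          rw [T_anti φ₀ (seq M) hσ hπ, map_neg]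
        have hSadd : ∀ x y z : A,
            coeff (R := B) (M+1) (TFm σ π φ₀ (seq M) (C (R := A) (x + y)) (C (R := A) z))
              = coeff (R := B) (M+1) (TFm σ π φ₀ (seq M) (C (R := A) x) (C (R := A) z))
                + coeff (R := B) (M+1) (TFm σ π φ₀ (seq M) (C (R := A) y) (C (R := A) z)) := by
          intro x y z
          rw [show (C (R := A) (x + y)) = C (R := A) x + C (R := A) y from map_add _ _ _,
            T_add_left φ₀ (seq M) hσ hπ, map_add]
        have hSleib : ∀ x y z : A,
            coeff (R := B) (M+1) (TFm σ π φ₀ (seq M) (C (R := A) (x * y)) (C (R := A) z))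
              = φ₀ x * coeff (R := B) (M+1) (TFm σ π φ₀ (seq M) (C (R := A) y) (C (R := A) z))
                + coeff (R := B) (M+1) (TFm σ π φ₀ (seq M) (C (R := A) x) (C (R := A) z)) * φ₀ y := by
          intro x y z
          rw [show (C (R := A) (x * y)) = C (R := A) x * C (R := A) y from map_mul _ _ _,
            T_leibniz_left φ₀ (seq M) hσ hπ hd0', map_add,
            coeff_mul_ord_right (M+1) _ _ (hvanlt (C (R := A) y) (C (R := A) z)),
            coeff_mul_ord_left (M+1) _ _ (hvanlt (C (R := A) x) (C (R := A) z)),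
            Phi_coeff0, Phi_coeff0, PowerSeries.coeff_zero_C, PowerSeries.coeff_zero_C]
        have hSclosed : ∀ a b c : A,
            σ₀ (φ₀ a) (coeff (R := B) (M+1) (TFm σ π φ₀ (seq M) (C (R := A) b) (C (R := A) c)))
              + σ₀ (φ₀ b) (coeff (R := B) (M+1) (TFm σ π φ₀ (seq M) (C (R := A) c) (C (R := A) a)))
              + σ₀ (φ₀ c) (coeff (R := B) (M+1) (TFm σ π φ₀ (seq M) (C (R := A) a) (C (R := A) b)))
              + coeff (R := B) (M+1) (TFm σ π φ₀ (seq M) (C (R := A) a) (C (R := A) (π₀ b c)))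
              + coeff (R := B) (M+1) (TFm σ π φ₀ (seq M) (C (R := A) b) (C (R := A) (π₀ c a)))
              + coeff (R := B) (M+1) (TFm σ π φ₀ (seq M) (C (R := A) c) (C (R := A) (π₀ a b))) = 0 := by
          intro a b c
          have hJ := congrArg (coeff (R := B) (M+1))
            (T_jacobi φ₀ (seq M) hσ hπ (C (R := A) a) (C (R := A) b) (C (R := A) c))
          rw [map_zero, map_add, map_add, map_add, map_add, map_add] at hJ
          have h1 : ∀ x y z : A,
              coeff (R := B) (M+1) (σ (PhiF φ₀ (seq M) (C (R := A) x))
                  (TFm σ π φ₀ (seq M) (C (R := A) y) (C (R := A) z)))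
                = σ₀ (φ₀ x)
                    (coeff (R := B) (M+1) (TFm σ π φ₀ (seq M) (C (R := A) y) (C (R := A) z))) := by
            intro x y z
            rw [coeff_br_ord_right hσ hσX hσ0 (M+1) _ _ (hvanlt (C (R := A) y) (C (R := A) z)),
              Phi_coeff0, PowerSeries.coeff_zero_C]
          have h2 : ∀ x y z : A,
              coeff (R := B) (M+1) (TFm σ π φ₀ (seq M) (C (R := A) x) (π (C (R := A) y) (C (R := A) z)))
                = coeff (R := B) (M+1) (TFm σ π φ₀ (seq M) (C (R := A) x) (C (R := A) (π₀ y z))) := by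
            intro x y z
            have hdec : π (C (R := A) y) (C (R := A) z)
                = C (R := A) (π₀ y z) + PowerSeries.X * psTail (π (C (R := A) y) (C (R := A) z)) := by
              have hd := ps_decomp (π (C (R := A) y) (C (R := A) z))
              rw [hπ0 y z] at hd
              exact hd
            rw [hdec, T_add_right φ₀ (seq M) hσ hπ, map_add,
              T_X_right φ₀ (seq M) hσ hπ hd0' hσX hπX, coeff_succ_X_mul,
              hvan' M le_rfl _ _, add_zero]
          rw [h1, h1, h1, h2, h2, h2] at hJ
          exact hJ
        -- apply H² = 0 to -S
        have hex : ∃ ξ : A → B, (∀ x y, ξ (x + y) = ξ x + ξ y) ∧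
            (∀ x y, ξ (x * y) = φ₀ x * ξ y + ξ x * φ₀ y) ∧
            ∀ a₁ a₂, - coeff (R := B) (M+1) (TFm σ π φ₀ (seq M) (C (R := A) a₁) (C (R := A) a₂))
              = σ₀ (φ₀ a₁) (ξ a₂) - σ₀ (φ₀ a₂) (ξ a₁) - ξ (π₀ a₁ a₂) := by
          have := hH2
            (fun a b => - coeff (R := B) (M+1) (TFm σ π φ₀ (seq M) (C (R := A) a) (C (R := A) b)))
            (fun x y => by beta_reduce; rw [hSanti x y])
            (fun x y z => by beta_reduce; rw [hSadd x y z]; ring)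
            (fun x y z => by beta_reduce; rw [hSleib x y z]; ring)
            (fun a b c => by
              beta_reduce
              rw [hσ₀.neg_right, hσ₀.neg_right, hσ₀.neg_right]
              linear_combination - hSclosed a b c)
          exact this
        obtain ⟨ξ, hξadd, hξleib, hξform, hξstep⟩ := hstep (M+1) (seq M) hex
        have hdN : dfin (M+1) = hl ξ := by rw [hdfin_succ M, hξstep]
        have hdNφ : ∀ a : A, dfin (M+1) (φ₀ a) = ξ a := by
          intro a
          rw [hdN]
          exact hlsec ξ hξadd hξleib a
        -- coefficient (M+1) of the corrected defect at constants
        have hagLt : ∀ k < M + 1, dfin k = seq M k := fun k hk => hag k (by omega)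
        have hseqM_top : seq M (M+1) = 0 := hseq_hi M (M+1) (by omega)
        have hEtop : ∀ f : PowerSeries A,
            coeff (R := B) (M+1) (PhiF φ₀ dfin f)
              = coeff (R := B) (M+1) (PhiF φ₀ (seq M) f) + dfin (M+1) (φ₀ (coeff (R := A) 0 f)) := by
          intro f
          simp only [PhiF]
          rw [coeff_expF_top dfin (seq M) (M+1) (by omega) hdfin0 hagLt hseqM_top,
            PowerSeries.coeff_map]
        have hElow : ∀ (f : PowerSeries A), ∀ i ≤ M,
            coeff (R := B) i (PhiF φ₀ dfin f) = coeff (R := B) i (PhiF φ₀ (seq M) f) := by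
          intro f i hi
          exact coeff_expF_congr dfin (seq M) M hag i hi _
        have hconst : ∀ a b : A,
            coeff (R := B) (M+1) (TFm σ π φ₀ dfin (C (R := A) a) (C (R := A) b)) = 0 := by
          intro a b
          have hu := hEtop (C (R := A) a)
          have hv := hEtop (C (R := A) b)
          rw [PowerSeries.coeff_zero_C] at hu hv
          -- σ part
          have hσpart : coeff (R := B) (M+1)
              (σ (PhiF φ₀ dfin (C (R := A) a)) (PhiF φ₀ dfin (C (R := A) b)))
              = coeff (R := B) (M+1)
                  (σ (PhiF φ₀ (seq M) (C (R := A) a)) (PhiF φ₀ (seq M) (C (R := A) b)))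
                + σ₀ (ξ a) (φ₀ b) + σ₀ (φ₀ a) (ξ b) := by
            have hsplit : σ (PhiF φ₀ dfin (C (R := A) a)) (PhiF φ₀ dfin (C (R := A) b))
                = σ (PhiF φ₀ (seq M) (C (R := A) a)) (PhiF φ₀ (seq M) (C (R := A) b))
                  + (σ (PhiF φ₀ dfin (C (R := A) a) - PhiF φ₀ (seq M) (C (R := A) a))
                      (PhiF φ₀ dfin (C (R := A) b))
                    + σ (PhiF φ₀ (seq M) (C (R := A) a))
                      (PhiF φ₀ dfin (C (R := A) b) - PhiF φ₀ (seq M) (C (R := A) b))) := by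
              rw [hσ.sub_left, hσ.sub_right]
              ring
            rw [hsplit, map_add, map_add]
            have hud : ∀ j < M + 1,
                coeff (R := B) j (PhiF φ₀ dfin (C (R := A) a) - PhiF φ₀ (seq M) (C (R := A) a)) = 0 := by
              intro j hj
              rw [map_sub, hElow (C (R := A) a) j (by omega), sub_self]
            have hvd : ∀ j < M + 1,
                coeff (R := B) j (PhiF φ₀ dfin (C (R := A) b) - PhiF φ₀ (seq M) (C (R := A) b)) = 0 := by
              intro j hj
              rw [map_sub, hElow (C (R := A) b) j (by omega), sub_self]
            rw [coeff_br_ord_left hσ hσX hσ0 (M+1) _ _ hud,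
              coeff_br_ord_right hσ hσX hσ0 (M+1) _ _ hvd]
            rw [map_sub, hu, map_sub, hv, Phi_coeff0, Phi_coeff0,
              PowerSeries.coeff_zero_C, PowerSeries.coeff_zero_C, hdNφ, hdNφ]
            ring_nf
          -- π part
          have hπpart : coeff (R := B) (M+1) (PhiF φ₀ dfin (π (C (R := A) a) (C (R := A) b)))
              = coeff (R := B) (M+1) (PhiF φ₀ (seq M) (π (C (R := A) a) (C (R := A) b)))
                + ξ (π₀ a b) := by
            rw [hEtop, hπ0, hdNφ]
          simp only [TFm]
          rw [map_sub, hσpart, hπpart]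
          have hback : coeff (R := B) (M+1)
              (σ (PhiF φ₀ (seq M) (C (R := A) a)) (PhiF φ₀ (seq M) (C (R := A) b)))
              - coeff (R := B) (M+1) (PhiF φ₀ (seq M) (π (C (R := A) a) (C (R := A) b)))
              = coeff (R := B) (M+1) (TFm σ π φ₀ (seq M) (C (R := A) a) (C (R := A) b)) := by
            simp only [TFm, map_sub]
          linear_combination hback - hξform a b + hσ₀.antisymm (ξ a) (φ₀ b)
        -- extend to general arguments
        intro f g
        have e1 : coeff (R := B) (M+1) (TFm σ π φ₀ dfin f g)
            = coeff (R := B) (M+1) (TFm σ π φ₀ dfin (C (R := A) (coeff (R := A) 0 f)) g) := by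
          conv_lhs => rw [ps_decomp f]
          rw [T_add_left φ₀ dfin hσ hπ, map_add,
            T_X_left φ₀ dfin hσ hπ hdfin0 hσX hπX, coeff_succ_X_mul,
            ih M (by omega) (psTail f) g, add_zero]
        have e2 : coeff (R := B) (M+1) (TFm σ π φ₀ dfin (C (R := A) (coeff (R := A) 0 f)) g)
            = coeff (R := B) (M+1)
                (TFm σ π φ₀ dfin (C (R := A) (coeff (R := A) 0 f)) (C (R := A) (coeff (R := A) 0 g))) := by
          conv_lhs => rw [ps_decomp g]
          rw [T_add_right φ₀ dfin hσ hπ, map_add,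
            T_X_right φ₀ dfin hσ hπ hdfin0 hσX hπX, coeff_succ_X_mul,
            ih M (by omega) _ (psTail g), add_zero]
        rw [e1, e2]
        exact hconst _ _
  -- conclusion
  refine ⟨Dm dfin, ⟨Dm_add dfin, Dm_smul dfin, Dm_mul dfin, Dm_X dfin,
    fun f => coeff_zero_Dm dfin hdfin0 f⟩, ?_⟩
  intro f g
  have hT : TFm σ π φ₀ dfin f g = 0 :=
    PowerSeries.ext fun n => by rw [main n f g, map_zero]
  simp only [TFm, PhiF] at hT
  exact (sub_eq_zero.mp hT).symm
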